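/- (Lower bound of the stage-count theorem.) Let (A, b) be an s-stage DIRK scheme with A lower triangular and invertible, c = A e, and b^T e = 1 (order at least 1). Let n_c denote the number of distinct values among the abscissas c₁, …, c_s. If the scheme has weak stage order at least q and q ≤ 2 n_c − 1, then dim(K_q) ≥ ⌊q/2⌋. -/

import Mathlib

open Matrix

section Stmt7Aux

open Polynomial



noncomputable def bor (p : Polynomial ℝ) : Polynomial ℝ :=
  ∑ j ∈ Finset.range (p.natDegree + 1),
    Polynomial.C (p.coeff j * (Nat.factorial j : ℝ)) * Polynomial.X ^ j

lemma bor_coeff (p : Polynomial ℝ) (i : ℕ) :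
    (bor p).coeff i = p.coeff i * (Nat.factorial i : ℝ) := by
  rw [bor, Polynomial.finset_sum_coeff]
  simp only [Polynomial.coeff_C_mul, Polynomial.coeff_X_pow, mul_ite, mul_one, mul_zero]
  rw [Finset.sum_ite_eq (Finset.range (p.natDegree + 1)) i]
  split_ifs with h
  · rfl
  · have h' : p.natDegree < i := by
      by_contra hcon
      exact h (Finset.mem_range.2 (by omega))
    rw [Polynomial.coeff_eq_zero_of_natDegree_lt h', zero_mul]

lemma bor_natDegree_le (p : Polynomial ℝ) : (bor p).natDegree ≤ p.natDegree := by
  apply Polynomial.natDegree_le_iff_coeff_eq_zero.2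
  intro N hN
  rw [bor_coeff, Polynomial.coeff_eq_zero_of_natDegree_lt hN, zero_mul]

lemma bor_X_mul (p : Polynomial ℝ) :
    bor (Polynomial.X * p) = Polynomial.X * Polynomial.derivative (Polynomial.X * bor p) := by
  ext i
  cases i with
  | zero =>
    simp [bor_coeff, Polynomial.mul_coeff_zero]
  | succ i =>
    rw [bor_coeff, Polynomial.coeff_X_mul, Polynomial.coeff_X_mul, Polynomial.coeff_derivative,
      Polynomial.coeff_X_mul, bor_coeff, Nat.factorial_succ]
    push_cast
    ring


section
variable {n : ℕ} (B : Matrix (Fin n) (Fin n) ℝ)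

lemma sum_mulVec' {ι : Type*} (s : Finset ι) (M : ι → Matrix (Fin n) (Fin n) ℝ)
    (v : Fin n → ℝ) : (∑ j ∈ s, M j).mulVec v = ∑ j ∈ s, (M j).mulVec v := by
  ext i
  simp only [Matrix.mulVec, dotProduct, Matrix.sum_apply, Finset.sum_apply, Finset.sum_mul]
  rw [Finset.sum_comm]

lemma pow_mulVec_mem (K : Submodule ℝ (Fin n → ℝ))
    (hKB : ∀ v ∈ K, B.mulVec v ∈ K) :
    ∀ (j : ℕ) (v), v ∈ K → (B ^ j).mulVec v ∈ K := by
  intro j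
  induction j with
  | zero => intro v hv; simpa [Matrix.one_mulVec] using hv
  | succ j ih =>
    intro v hv
    rw [pow_succ', ← Matrix.mulVec_mulVec]
    exact hKB _ (ih v hv)

lemma aeval_mulVec_mem (K : Submodule ℝ (Fin n → ℝ))
    (hKB : ∀ v ∈ K, B.mulVec v ∈ K) :
    ∀ (f : Polynomial ℝ) (v), v ∈ K → (Polynomial.aeval B f).mulVec v ∈ K := by
  intro f
  induction f using Polynomial.induction_on' with
  | add p q hp hq =>
    intro v hv
    rw [map_add, Matrix.add_mulVec]
    exact K.add_mem (hp v hv) (hq v hv)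
  | monomial k a =>
    intro v hv
    rw [Polynomial.aeval_monomial, ← Algebra.smul_def, Matrix.smul_mulVec]
    exact K.smul_mem _ (pow_mulVec_mem B K hKB k v hv)

end


section
variable {n : ℕ} (B : Matrix (Fin n) (Fin n) ℝ)

lemma kappa_mem {q : ℕ} (c : Fin n → ℝ)
    (K : Submodule ℝ (Fin n → ℝ))
    (hKB : ∀ v ∈ K, B.mulVec v ∈ K)
    (hτ : ∀ k, 1 ≤ k → k ≤ q →
      (B.mulVec (fun i => c i ^ (k - 1)) - (k : ℝ)⁻¹ • fun i => c i ^ k) ∈ K) :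
    ∀ k, k ≤ q →
      ((fun i => c i ^ k) - (Nat.factorial k : ℝ) • (B ^ k).mulVec (fun _ => 1)) ∈ K := by
  intro k
  induction k with
  | zero =>
    intro _
    have : ((fun i => c i ^ 0) - (Nat.factorial 0 : ℝ) • (B ^ 0).mulVec (fun _ => (1:ℝ))) = 0 := by
      funext i
      simp [Matrix.one_mulVec]
    rw [this]; exact K.zero_mem
  | succ k ih =>
    intro hk
    have hk' : k ≤ q := by omega
    have h1 : B.mulVec ((fun i => c i ^ k) - (Nat.factorial k : ℝ) • (B ^ k).mulVec (fun _ => 1)) ∈ K :=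
      hKB _ (ih hk')
    have h2 := hτ (k+1) (by omega) hk
    have hre : ((fun i => c i ^ (k+1)) - (Nat.factorial (k+1) : ℝ) • (B ^ (k+1)).mulVec (fun _ => 1))
        = ((k:ℝ)+1) • (B.mulVec ((fun i => c i ^ k) - (Nat.factorial k : ℝ) • (B ^ k).mulVec (fun _ => 1)))
          - ((k:ℝ)+1) • (B.mulVec (fun i => c i ^ ((k+1) - 1)) - ((k+1 : ℕ) : ℝ)⁻¹ • fun i => c i ^ (k+1)) := by
      have hs : k + 1 - 1 = k := rfl
      rw [hs, pow_succ', ← Matrix.mulVec_mulVec]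
      funext i
      have hne : ((k:ℝ)+1) ≠ 0 := by positivity
      simp only [Pi.sub_apply, Pi.smul_apply, Matrix.mulVec_sub, Matrix.mulVec_smul,
        smul_eq_mul, Nat.factorial_succ]
      push_cast
      field_simp
      ring
    rw [hre]
    exact K.sub_mem (K.smul_mem _ h1) (K.smul_mem _ h2)

end

lemma core {n q : ℕ} (B : Matrix (Fin n) (Fin n) ℝ) (hdet : B.det ≠ 0)
    (c : Fin n → ℝ)
    (K : Submodule ℝ (Fin n → ℝ))
    (hKB : ∀ v ∈ K, B.mulVec v ∈ K)
    (hτ : ∀ k, 1 ≤ k → k ≤ q →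
      (B.mulVec (fun i => c i ^ (k - 1)) - (k : ℝ)⁻¹ • fun i => c i ^ k) ∈ K)
    (hqm : 2 * (Finset.image c Finset.univ).card ≤ q) :
    (Finset.image c Finset.univ).card ≤ Module.finrank ℝ K := by
  classical
  set m := (Finset.image c Finset.univ).card with hm
  set e : Fin n → ℝ := fun _ => 1 with he_def
  have hκ := kappa_mem B c K hKB hτ
  have hBpow := pow_mulVec_mem B K hKB
  have hpolyK := aeval_mulVec_mem B K hKB
  set I : Ideal (Polynomial ℝ) :=
    { carrier := {f | (Polynomial.aeval B f).mulVec e ∈ K}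
      add_mem' := fun {a b} ha hb => by
        simp only [Set.mem_setOf_eq, _root_.map_add, Matrix.add_mulVec] at *
        exact K.add_mem ha hb
      zero_mem' := by
        simp only [Set.mem_setOf_eq, map_zero, Matrix.zero_mulVec]
        exact K.zero_mem
      smul_mem' := fun g f hf => by
        simp only [Set.mem_setOf_eq, smul_eq_mul] at hf ⊢
        rw [_root_.map_mul, ← Matrix.mulVec_mulVec]
        exact hpolyK g _ hf } with hI_def
  have hmemI : ∀ f : Polynomial ℝ, f ∈ I ↔ (Polynomial.aeval B f).mulVec e ∈ K :=
    fun f => Iff.rfl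
  set p0 : Polynomial ℝ := ∏ γ ∈ Finset.image c Finset.univ,
    (Polynomial.X - Polynomial.C γ) with hp0
  have hp0monic : p0.Monic :=
    Polynomial.monic_prod_of_monic _ _ fun γ _ => Polynomial.monic_X_sub_C γ
  have hp0deg : p0.natDegree = m := by
    rw [hp0, Polynomial.natDegree_prod_of_monic _ _ fun γ _ => Polynomial.monic_X_sub_C γ]
    simp [Polynomial.natDegree_X_sub_C, hm]
  have hp0root : ∀ i, p0.eval (c i) = 0 := by
    intro i
    rw [hp0, Polynomial.eval_prod]
    apply Finset.prod_eq_zero (Finset.mem_image_of_mem c (Finset.mem_univ i))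
    simp
  have hmq : m ≤ q := by omega
  have hborI : ∀ p : Polynomial ℝ, p.natDegree ≤ q → (∀ i, p.eval (c i) = 0) → bor p ∈ I := by
    intro p hdeg hroot
    rw [hmemI]
    have h1 : (Polynomial.aeval B (bor p)).mulVec e
        = ∑ j ∈ Finset.range (p.natDegree + 1),
            (p.coeff j * (Nat.factorial j : ℝ)) • (B ^ j).mulVec e := by
      rw [bor, _root_.map_sum, sum_mulVec']
      congr 1
      funext j
      rw [_root_.map_mul, Polynomial.aeval_C, Polynomial.aeval_X_pow, ← Algebra.smul_def,
        Matrix.smul_mulVec]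
    have h2 : (0 : Fin n → ℝ)
        = ∑ j ∈ Finset.range (p.natDegree + 1), p.coeff j • (fun i => c i ^ j) := by
      funext i
      have := hroot i
      rw [Polynomial.eval_eq_sum_range] at this
      simp only [Finset.sum_apply, Pi.smul_apply, smul_eq_mul, Pi.zero_apply]
      rw [← this]
    have h3 : ∑ j ∈ Finset.range (p.natDegree + 1),
            (- p.coeff j) • ((fun i => c i ^ j) - (Nat.factorial j : ℝ) • (B ^ j).mulVec e)
        = (∑ j ∈ Finset.range (p.natDegree + 1),
            (p.coeff j * (Nat.factorial j : ℝ)) • (B ^ j).mulVec e)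
          - ∑ j ∈ Finset.range (p.natDegree + 1), p.coeff j • (fun i => c i ^ j) := by
      rw [← Finset.sum_sub_distrib]
      congr 1
      funext j
      rw [neg_smul, smul_sub, neg_sub, smul_smul]
    have h4 : (Polynomial.aeval B (bor p)).mulVec e
        = ∑ j ∈ Finset.range (p.natDegree + 1),
            (- p.coeff j) • ((fun i => c i ^ j) - (Nat.factorial j : ℝ) • (B ^ j).mulVec e) := by
      rw [h3, ← h2, sub_zero, h1]
    rw [h4]
    apply Submodule.sum_mem
    intro j hj
    have hjq : j ≤ q := by
      have := Finset.mem_range.1 hj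
      omega
    exact K.smul_mem _ (hκ j hjq)
  have he : e ∈ K := by
    by_contra heK
    obtain ⟨ψ, hgen⟩ := (IsPrincipalIdealRing.principal I).principal
    have hmemdvd : ∀ f : Polynomial ℝ, f ∈ I ↔ ψ ∣ f := by
      intro f
      rw [hgen]
      exact Ideal.mem_span_singleton
    have hXlpdeg : ∀ l : ℕ, (Polynomial.X ^ l * p0).natDegree = l + m := by
      intro l
      rw [Polynomial.natDegree_mul (pow_ne_zero l Polynomial.X_ne_zero) hp0monic.ne_zero,
        Polynomial.natDegree_X_pow, hp0deg]
    have hXlp : ∀ l, l ≤ q - m → (bor (Polynomial.X ^ l * p0)) ∈ I := by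
      intro l hl
      apply hborI
      · rw [hXlpdeg]; omega
      · intro i
        rw [Polynomial.eval_mul, hp0root, mul_zero]
    have hborne : ∀ l : ℕ, bor (Polynomial.X ^ l * p0) ≠ 0 := by
      intro l h0
      have hmon : (Polynomial.X ^ l * p0).Monic := (Polynomial.monic_X_pow l).mul hp0monic
      have hco : (bor (Polynomial.X ^ l * p0)).coeff (l + m) = (Nat.factorial (l+m) : ℝ) := by
        rw [bor_coeff, ← hXlpdeg l, hmon.coeff_natDegree, one_mul, hXlpdeg]
      rw [h0] at hco
      simp only [Polynomial.coeff_zero] at hco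
      exact (Nat.cast_ne_zero.2 (Nat.factorial_ne_zero (l+m))) hco.symm
    have hψ0 : ψ ≠ 0 := by
      intro h
      apply hborne 0
      have := (hmemdvd _).1 (hXlp 0 (by omega))
      rwa [h, zero_dvd_iff] at this
    have h1I : (1 : Polynomial ℝ) ∉ I := by
      intro h1
      apply heK
      have := (hmemI 1).1 h1
      simpa [Matrix.one_mulVec] using this
    have hBcancel : ∀ w, B.mulVec w ∈ K → w ∈ K := by
      have hinj : Function.Injective B.mulVec :=
        Matrix.mulVec_injective_iff_isUnit.2 ((Matrix.isUnit_iff_isUnit_det B).2 (Ne.isUnit hdet))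
      have hinj' : Function.Injective B.mulVecLin := by
        intro x y hxy
        exact hinj (by simpa [Matrix.mulVecLin_apply] using hxy)
      have hLe : Submodule.map B.mulVecLin K ≤ K := by
        rintro x ⟨v, hv, rfl⟩
        simpa [Matrix.mulVecLin_apply] using hKB v hv
      have hEq : Submodule.map B.mulVecLin K = K := by
        apply Submodule.eq_of_le_of_finrank_le hLe
        have := LinearEquiv.finrank_eq (Submodule.equivMapOfInjective B.mulVecLin hinj' K)
        omega
      intro w hw
      rw [← hEq] at hw
      obtain ⟨u, hu, huw⟩ := hw
      have : u = w := hinj (by simpa [Matrix.mulVecLin_apply] using huw)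
      rwa [← this]
    have hXψ : ¬ (Polynomial.X ∣ ψ) := by
      rintro ⟨φ, hφ⟩
      have hψI : ψ ∈ I := (hmemdvd ψ).2 dvd_rfl
      rw [hmemI, hφ, _root_.map_mul, Polynomial.aeval_X, ← Matrix.mulVec_mulVec] at hψI
      have hφI : φ ∈ I := (hmemI φ).2 (hBcancel _ hψI)
      have hd : ψ ∣ φ := (hmemdvd φ).1 hφI
      have hφ0 : φ ≠ 0 := fun h => hψ0 (by rw [hφ, h, mul_zero])
      have hle := Polynomial.natDegree_le_of_dvd hd hφ0
      have h2 : ψ.natDegree = φ.natDegree + 1 := by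
        rw [hφ, Polynomial.natDegree_mul Polynomial.X_ne_zero hφ0, Polynomial.natDegree_X]
        omega
      omega
    have hψc0 : ψ.coeff 0 ≠ 0 := fun h => hXψ (Polynomial.X_dvd_iff.2 h)
    have hψdeg : 0 < ψ.natDegree := by
      by_contra hcon
      have h0 : ψ.natDegree = 0 := by omega
      have := Polynomial.eq_C_of_natDegree_eq_zero h0
      have hunit : IsUnit ψ := by
        rw [this]
        exact Polynomial.isUnit_C.2 (Ne.isUnit hψc0)
      apply h1I
      rw [hmemdvd]
      exact hunit.dvd
    set ψc := ψ.map (algebraMap ℝ ℂ) with hψcdef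
    have hψcdeg : 0 < ψc.degree := by
      rw [hψcdef, Polynomial.degree_map_eq_of_injective (algebraMap ℝ ℂ).injective]
      exact Polynomial.natDegree_pos_iff_degree_pos.1 hψdeg
    obtain ⟨ρ, hρ⟩ := Complex.exists_root hψcdeg
    have hρ0 : ρ ≠ 0 := by
      intro h
      rw [h] at hρ
      have h2 : ψc.coeff 0 = 0 := by
        rw [Polynomial.coeff_zero_eq_eval_zero]
        exact hρ
      rw [hψcdef, Polynomial.coeff_map] at h2
      exact hψc0 ((map_eq_zero_iff _ (algebraMap ℝ ℂ).injective).1 h2)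
    set u : ℕ → Polynomial ℂ := fun l => (bor (Polynomial.X ^ l * p0)).map (algebraMap ℝ ℂ)
      with hudef
    have hune : ∀ l, u l ≠ 0 := by
      intro l h
      exact hborne l ((Polynomial.map_eq_zero_iff (algebraMap ℝ ℂ).injective).1 h)
    have hurel : ∀ l, u (l+1) = Polynomial.X * Polynomial.derivative (Polynomial.X * u l) := by
      intro l
      have hx : Polynomial.X ^ (l+1) * p0 = Polynomial.X * (Polynomial.X ^ l * p0) := by
        ring
      rw [hudef]
      simp only
      rw [hx, bor_X_mul, Polynomial.map_mul, Polynomial.map_X, ← Polynomial.derivative_map,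
        Polynomial.map_mul, Polynomial.map_X]
    have huroot : ∀ l, l ≤ q - m → (u l).IsRoot ρ := by
      intro l hl
      have := (hmemdvd _).1 (hXlp l hl)
      exact hρ.dvd (Polynomial.map_dvd _ this)
    have hkey : ∀ j, j ≤ q - m → j + 1 ≤ Polynomial.rootMultiplicity ρ (u (q - m - j)) := by
      intro j
      induction j with
      | zero =>
        intro _
        have := (Polynomial.rootMultiplicity_pos (hune (q-m-0))).2 (huroot _ (by omega))
        omega
      | succ j ih =>
        intro hj
        have hl1 : q - m - j = (q - m - (j+1)) + 1 := by omega
        set l := q - m - (j+1) with hl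
        have h2 : j + 1 ≤ Polynomial.rootMultiplicity ρ (u (l+1)) := by
          rw [← hl1]
          exact ih (by omega)
        rw [hurel l] at h2
        have hXune : Polynomial.X * Polynomial.derivative (Polynomial.X * u l) ≠ 0 := by
          intro h0
          rw [h0, Polynomial.rootMultiplicity_zero] at h2
          omega
        have hXroot : ¬ (Polynomial.X : Polynomial ℂ).IsRoot ρ := by
          simp [Polynomial.IsRoot, hρ0]
        rw [Polynomial.rootMultiplicity_mul hXune,
          Polynomial.rootMultiplicity_eq_zero hXroot, zero_add] at h2
        have hroot_ul : (Polynomial.X * u l).IsRoot ρ := by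
          have := huroot l (by omega)
          simp [Polynomial.IsRoot, Polynomial.eval_mul] at this ⊢
          exact Or.inr this
        rw [Polynomial.derivative_rootMultiplicity_of_root hroot_ul] at h2
        have hXul : Polynomial.X * u l ≠ 0 := mul_ne_zero Polynomial.X_ne_zero (hune l)
        rw [Polynomial.rootMultiplicity_mul hXul,
          Polynomial.rootMultiplicity_eq_zero hXroot, zero_add] at h2
        have hpos : 0 < Polynomial.rootMultiplicity ρ (u l) :=
          (Polynomial.rootMultiplicity_pos (hune l)).2 (huroot l (by omega))
        omega
    have hfin : q - m + 1 ≤ Polynomial.rootMultiplicity ρ (u 0) := by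
      have := hkey (q - m) le_rfl
      rwa [Nat.sub_self] at this
    have hdvd2 : (Polynomial.X - Polynomial.C ρ) ^ (q - m + 1) ∣ u 0 :=
      dvd_trans (pow_dvd_pow _ hfin) (Polynomial.pow_rootMultiplicity_dvd _ ρ)
    have hdeg2 := Polynomial.natDegree_le_of_dvd hdvd2 (hune 0)
    rw [Polynomial.natDegree_pow, Polynomial.natDegree_X_sub_C, mul_one] at hdeg2
    have hu0deg : (u 0).natDegree ≤ m := by
      rw [hudef]
      simp only
      rw [Polynomial.natDegree_map_eq_of_injective (algebraMap ℝ ℂ).injective]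
      calc (bor (Polynomial.X ^ 0 * p0)).natDegree ≤ (Polynomial.X ^ 0 * p0).natDegree :=
            bor_natDegree_le _
        _ = m := by rw [pow_zero, one_mul, hp0deg]
    omega
  have hpow : ∀ k, k ≤ q → (fun i => c i ^ k) ∈ K := by
    intro k hk
    have h1 := hκ k hk
    have h2 : ((Nat.factorial k : ℝ)) • (B ^ k).mulVec e ∈ K :=
      K.smul_mem _ (hBpow k e he)
    have h3 : (fun i => c i ^ k)
        = ((fun i => c i ^ k) - (Nat.factorial k : ℝ) • (B ^ k).mulVec e)
          + (Nat.factorial k : ℝ) • (B ^ k).mulVec e := by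
      funext i
      simp
    rw [h3]
    exact K.add_mem h1 h2
  -- Vandermonde finish
  set img := Finset.image c Finset.univ with himg
  let eo := img.orderIsoOfFin (hm.symm)
  set γ : Fin m → ℝ := fun a => (eo a : ℝ) with hγ
  have hγinj : Function.Injective γ := by
    intro a b hab
    exact eo.injective (Subtype.ext hab)
  have hγex : ∀ a : Fin m, ∃ i : Fin n, c i = γ a := by
    intro a
    have h1 : (eo a : ℝ) ∈ Finset.image c Finset.univ := (eo a).2
    obtain ⟨i, _, hi⟩ := Finset.mem_image.1 h1
    exact ⟨i, hi⟩
  choose σ hσ using hγex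
  set v : Fin m → (Fin n → ℝ) := fun a i => c i ^ (a : ℕ) with hv
  have hvK : ∀ a, v a ∈ K := fun a => hpow a (by have := a.isLt; omega)
  set W : Matrix (Fin m) (Fin m) ℝ := Matrix.of fun a b : Fin m => γ b ^ (a : ℕ) with hW
  have hWunit : IsUnit W := by
    rw [Matrix.isUnit_iff_isUnit_det]
    apply Ne.isUnit
    have hWt : W = (Matrix.vandermonde γ).transpose := by
      ext a b
      simp [hW, Matrix.vandermonde]
    rw [hWt, Matrix.det_transpose, Matrix.det_vandermonde]
    apply Finset.prod_ne_zero_iff.2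
    intro i _
    apply Finset.prod_ne_zero_iff.2
    intro j hj
    have hne : i ≠ j := by
      rw [Finset.mem_Ioi] at hj
      exact ne_of_lt hj
    exact sub_ne_zero.2 fun h => hne ((hγinj h).symm)
  have hrows : LinearIndependent ℝ (fun a => W a) :=
    Matrix.linearIndependent_rows_iff_isUnit.2 hWunit
  have hli : LinearIndependent ℝ v := by
    apply LinearIndependent.of_comp (LinearMap.funLeft ℝ ℝ σ)
    have hcomp : (⇑(LinearMap.funLeft ℝ ℝ σ) ∘ v) = fun a => W a := by
      funext a b
      simp [LinearMap.funLeft_apply, hv, hW, hσ]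
    rw [hcomp]
    exact hrows
  have hsp : Submodule.span ℝ (Set.range v) ≤ K :=
    Submodule.span_le.2 (Set.range_subset_iff.2 hvK)
  have hfr := finrank_span_eq_card hli
  calc m = Module.finrank ℝ (Submodule.span ℝ (Set.range v)) := by
        rw [hfr, Fintype.card_fin]
    _ ≤ Module.finrank ℝ K := Submodule.finrank_mono hsp

end Stmt7Aux

lemma sum_prefix {s t : ℕ} (h : t ≤ s) (f : Fin s → ℝ)
    (hf : ∀ j : Fin s, t ≤ (j : ℕ) → f j = 0) :
    ∑ j, f j = ∑ b : Fin t, f (Fin.castLE h b) := by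
  classical
  set F : ℕ → ℝ := fun k => if hk : k < s then f ⟨k, hk⟩ else 0 with hF
  have h1 : ∑ j : Fin s, f j = ∑ k ∈ Finset.range s, F k := by
    rw [← Fin.sum_univ_eq_sum_range]
    apply Finset.sum_congr rfl
    intro j _
    simp [hF, j.isLt]
  have h2 : ∑ k ∈ Finset.range t, F k = ∑ k ∈ Finset.range s, F k := by
    apply Finset.sum_subset (Finset.range_subset_range.2 h)
    intro x hx hnx
    rw [Finset.mem_range] at hx
    rw [Finset.mem_range] at hnx
    simp only [hF, dif_pos hx]
    exact hf ⟨x, hx⟩ (by simp only [Fin.val_mk]; omega)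
  have h3 : ∑ k ∈ Finset.range t, F k = ∑ b : Fin t, f (Fin.castLE h b) := by
    rw [← Fin.sum_univ_eq_sum_range]
    apply Finset.sum_congr rfl
    intro b _
    simp only [hF]
    rw [dif_pos (lt_of_lt_of_le b.isLt h)]
    rfl
  rw [h1, ← h2, h3]

lemma nat_ivt (g : ℕ → ℕ) (h1 : ∀ t, g (t+1) ≤ g t + 1) (h0 : g 0 = 0) :
    ∀ (N m : ℕ), m ≤ g N → ∃ t, t ≤ N ∧ g t = m := by
  intro N
  induction N with
  | zero =>
    intro m hm
    exact ⟨0, le_rfl, by omega⟩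
  | succ N ih =>
    intro m hm
    by_cases hc : m ≤ g N
    · obtain ⟨t, ht, hgt⟩ := ih m hc
      exact ⟨t, by omega, hgt⟩
    · have := h1 N
      exact ⟨N+1, le_rfl, by omega⟩

/-- Lower bound of the stage-count theorem: for an `s`-stage DIRK scheme with
invertible lower-triangular `A`, `c = A e`, `bᵀ e = 1`, having `n_c` distinct
abscissas, weak stage order ≥ `q`, and `q ≤ 2 n_c − 1`, one has `dim K_q ≥ ⌊q/2⌋`. -/
theorem stmt7 {s : ℕ} (A : Matrix (Fin s) (Fin s) ℝ) (b : Fin s → ℝ)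
    (hlow : ∀ i j : Fin s, i < j → A i j = 0)
    (hdet : A.det ≠ 0)
    (c : Fin s → ℝ) (hc : c = A.mulVec fun _ => 1)
    (hb : (b ⬝ᵥ fun _ => 1) = 1)
    (nc : ℕ) (hnc : nc = (Finset.image c Finset.univ).card)
    (q : ℕ) (hq : q ≤ 2 * nc - 1)
    (τ : ℕ → Fin s → ℝ)
    (hτ : ∀ k, τ k = A.mulVec (fun i => c i ^ (k - 1)) - (k : ℝ)⁻¹ • fun i => c i ^ k)
    (hwso : ∀ j, j < s → ∀ k, 1 ≤ k → k ≤ q → b ⬝ᵥ (A ^ j).mulVec (τ k) = 0)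
    (Kq : Submodule ℝ (Fin s → ℝ))
    (hKq : Kq = Submodule.span ℝ
      {x | ∃ j, j < s ∧ ∃ k, 1 ≤ k ∧ k ≤ q ∧ x = (A ^ j).mulVec (τ k)}) :
    q / 2 ≤ Module.finrank ℝ Kq := by
  classical
  by_cases hm0 : q / 2 = 0
  · simp [hm0]
  set m := q / 2 with hm
  -- s ≥ 1
  rcases Nat.eq_zero_or_pos s with hs | hs
  · exfalso
    subst hs
    simp [dotProduct] at hb
  -- nc bound
  have hnc1 : 1 ≤ nc := by
    rw [hnc]
    apply Finset.card_pos.2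
    exact ⟨c ⟨0, hs⟩, Finset.mem_image_of_mem c (Finset.mem_univ _)⟩
  have hmnc : m < nc := by omega
  -- prefix counting function
  set g : ℕ → ℕ :=
    fun t => ((Finset.univ.filter fun j : Fin s => (j : ℕ) < t).image c).card with hg
  have hg0 : g 0 = 0 := by
    simp [hg]
  have hgs : g s = nc := by
    rw [hnc, hg]
    simp only
    congr 2
    apply Finset.filter_true_of_mem
    intro j _
    exact j.isLt
  have hgstep : ∀ t, g (t+1) ≤ g t + 1 := by
    intro t
    by_cases ht : t < s
    · have hins : (Finset.univ.filter fun j : Fin s => (j : ℕ) < t + 1)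
          = insert (⟨t, ht⟩ : Fin s) (Finset.univ.filter fun j : Fin s => (j : ℕ) < t) := by
        ext j
        simp only [Finset.mem_filter, Finset.mem_univ, true_and, Finset.mem_insert, Fin.ext_iff,
          Fin.val_mk]
        omega
      rw [hg]
      simp only
      rw [hins, Finset.image_insert]
      exact Finset.card_insert_le _ _
    · have heq : (Finset.univ.filter fun j : Fin s => (j : ℕ) < t + 1)
          = (Finset.univ.filter fun j : Fin s => (j : ℕ) < t) := by
        ext j
        have := j.isLt
        simp only [Finset.mem_filter, Finset.mem_univ, true_and]
        omega
      rw [hg]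
      simp only
      rw [heq]
      omega
  obtain ⟨t, hts, hgt⟩ := nat_ivt g hgstep hg0 s m (by omega)
  -- truncation
  set ι : Fin t → Fin s := Fin.castLE hts with hι
  set B : Matrix (Fin t) (Fin t) ℝ := A.submatrix ι ι with hB
  set T : (Fin s → ℝ) →ₗ[ℝ] (Fin t → ℝ) := LinearMap.funLeft ℝ ℝ ι with hT
  -- diagonal entries nonzero
  have hlowA : A.BlockTriangular OrderDual.toDual := by
    intro i j hij
    exact hlow i j hij
  have hdiagA : ∀ i : Fin s, A i i ≠ 0 := by
    have hdA : A.det = ∏ i, A i i := Matrix.det_of_lowerTriangular A hlowA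
    rw [hdA] at hdet
    intro i hi
    exact hdet (Finset.prod_eq_zero (Finset.mem_univ i) hi)
  have hdetB : B.det ≠ 0 := by
    have hlowB : B.BlockTriangular OrderDual.toDual := by
      intro a b hab
      apply hlow
      exact hab
    rw [Matrix.det_of_lowerTriangular B hlowB]
    apply Finset.prod_ne_zero_iff.2
    intro a _
    exact hdiagA (ι a)
  -- truncated mulVec commutation
  have hTA : ∀ w : Fin s → ℝ, T (A.mulVec w) = B.mulVec (fun a => w (ι a)) := by
    intro w
    funext a
    have h1 : T (A.mulVec w) a = ∑ j, A (ι a) j * w j := rfl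
    have h2 : B.mulVec (fun a => w (ι a)) a = ∑ d : Fin t, A (ι a) (ι d) * w (ι d) := rfl
    rw [h1, h2]
    apply sum_prefix hts (fun j => A (ι a) j * w j)
    intro j hj
    have : ι a < j := by
      rw [Fin.lt_def]
      have : (ι a : ℕ) = (a : ℕ) := rfl
      omega
    rw [hlow _ _ this, zero_mul]
  -- Cayley-Hamilton: A^s as combination of lower powers
  have hAs : (A ^ s) = ∑ i ∈ Finset.range s, (-(A.charpoly.coeff i)) • A ^ i := by
    have hch := Matrix.aeval_self_charpoly A
    have hmon := A.charpoly_monic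
    have hdeg : A.charpoly.natDegree = s := by
      rw [Matrix.charpoly_natDegree_eq_dim]
      exact Fintype.card_fin s
    rw [hmon.as_sum, hdeg, _root_.map_add, Polynomial.aeval_X_pow, _root_.map_sum] at hch
    have hterm : ∀ i ∈ Finset.range s,
        (Polynomial.aeval A) (Polynomial.C (A.charpoly.coeff i) * Polynomial.X ^ i)
          = (A.charpoly.coeff i) • A ^ i := by
      intro i _
      rw [_root_.map_mul, Polynomial.aeval_C, Polynomial.aeval_X_pow, ← Algebra.smul_def]
    rw [Finset.sum_congr rfl hterm] at hch
    have h2 := eq_neg_of_add_eq_zero_left hch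
    rw [h2, ← Finset.sum_neg_distrib]
    apply Finset.sum_congr rfl
    intro i _
    rw [neg_smul]
  -- generators
  have hgenK : ∀ j, j < s → ∀ k, 1 ≤ k → k ≤ q → (A ^ j).mulVec (τ k) ∈ Kq := by
    intro j hj k h1 h2
    rw [hKq]
    exact Submodule.subset_span ⟨j, hj, k, h1, h2, rfl⟩
  -- invariance
  have hAinv : ∀ x ∈ Kq, A.mulVec x ∈ Kq := by
    have h2 : Submodule.map A.mulVecLin Kq ≤ Kq := by
      nth_rewrite 1 [hKq]
      rw [Submodule.map_span, Submodule.span_le]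
      rintro y ⟨z, ⟨j, hj, k, hk1, hkq, rfl⟩, rfl⟩
      simp only [Matrix.mulVecLin_apply, Matrix.mulVec_mulVec]
      rw [← pow_succ']
      by_cases hjs : j + 1 < s
      · exact hgenK _ hjs _ hk1 hkq
      · have hjs' : j + 1 = s := by omega
        rw [hjs', hAs, sum_mulVec']
        apply Submodule.sum_mem
        intro i hi
        rw [Matrix.smul_mulVec]
        exact Kq.smul_mem _ (hgenK i (Finset.mem_range.1 hi) _ hk1 hkq)
    intro x hx
    exact h2 ⟨x, hx, rfl⟩
  have hτK : ∀ k, 1 ≤ k → k ≤ q → τ k ∈ Kq := by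
    intro k h1 h2
    have := hgenK 0 hs k h1 h2
    rwa [pow_zero, Matrix.one_mulVec] at this
  -- apply core
  set c' : Fin t → ℝ := fun a => c (ι a) with hc'
  have hKB' : ∀ v ∈ Submodule.map T Kq, B.mulVec v ∈ Submodule.map T Kq := by
    rintro _ ⟨y, hy, rfl⟩
    exact ⟨A.mulVec y, hAinv y hy, hTA y⟩
  have hτ' : ∀ k, 1 ≤ k → k ≤ q →
      (B.mulVec (fun a => c' a ^ (k - 1)) - (k : ℝ)⁻¹ • fun a => c' a ^ k)
        ∈ Submodule.map T Kq := by
    intro k h1 h2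
    refine ⟨τ k, hτK k h1 h2, ?_⟩
    rw [hτ k, map_sub, LinearMapClass.map_smul]
    congr 1
    · exact hTA _
  have himg' : (Finset.image c' Finset.univ).card = m := by
    rw [← hgt, hg]
    congr 1
    ext x
    simp only [Finset.mem_image, Finset.mem_filter, Finset.mem_univ, true_and]
    constructor
    · rintro ⟨a, _, rfl⟩
      exact ⟨ι a, a.isLt, rfl⟩
    · rintro ⟨j, hj, rfl⟩
      exact ⟨⟨(j : ℕ), hj⟩, rfl⟩
  have hcore := core B hdetB c' (Submodule.map T Kq) hKB' hτ' (by rw [himg']; omega)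
  rw [himg'] at hcore
  calc q / 2 = m := hm.symm
    _ ≤ Module.finrank ℝ (Submodule.map T Kq) := hcore
    _ ≤ Module.finrank ℝ Kq := Submodule.finrank_map_le T Kq
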